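/- Let L be a distributive meet semi-lattice with top. Every prime filter of L is an optimal filter. Moreover, if L is a lattice, then a filter F of L is optimal if and only if F is a prime filter in the lattice sense (F is proper and a ∨ b ∈ F implies a ∈ F or b ∈ F). -/

import Mathlib

/-- A filter of a meet semi-lattice: a nonempty upper set closed under meets. -/
def IsSLFilter {L : Type*} [SemilatticeInf L] (F : Set L) : Prop :=
  F.Nonempty ∧ (∀ a b : L, a ∈ F → a ≤ b → b ∈ F) ∧
    (∀ a b : L, a ∈ F → b ∈ F → a ⊓ b ∈ F)

/-- A prime (meet-prime) filter of a meet semi-lattice. -/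
def IsSLPrimeFilter {L : Type*} [SemilatticeInf L] (F : Set L) : Prop :=
  IsSLFilter F ∧ F ≠ Set.univ ∧
    ∀ F₁ F₂ : Set L, IsSLFilter F₁ → IsSLFilter F₂ → F₁ ∩ F₂ ⊆ F → F₁ ⊆ F ∨ F₂ ⊆ F

/-- An ideal of a meet semi-lattice: a nonempty lower set in which any two
elements have a common upper bound lying in the ideal. -/
def IsSLIdeal {L : Type*} [SemilatticeInf L] (I : Set L) : Prop :=
  I.Nonempty ∧ (∀ a b : L, a ∈ I → b ≤ a → b ∈ I) ∧
    (∀ a b : L, a ∈ I → b ∈ I → ∃ c ∈ I, a ≤ c ∧ b ≤ c)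

/-- A meet semi-lattice is distributive. -/
def IsDistribSL (L : Type*) [SemilatticeInf L] : Prop :=
  ∀ a b₁ b₂ : L, b₁ ⊓ b₂ ≤ a → ∃ c₁ c₂ : L, b₁ ≤ c₁ ∧ b₂ ≤ c₂ ∧ a = c₁ ⊓ c₂

/-- A Frink ideal of a meet semi-lattice. -/
def IsFrinkIdeal {L : Type*} [SemilatticeInf L] (I : Set L) : Prop :=
  I.Nonempty ∧ ∀ A : Finset L, A.Nonempty → ↑A ⊆ I →
    ∀ c : L, (⋂ a ∈ A, Set.Ici a) ⊆ Set.Ici c → c ∈ I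

/-- An optimal filter: a filter whose complement is a Frink ideal. -/
def IsOptimalFilter {L : Type*} [SemilatticeInf L] (F : Set L) : Prop :=
  IsSLFilter F ∧ IsFrinkIdeal Fᶜ

/-- σ(a): the set of prime filters containing `a`. -/
def sigmaSet {L : Type*} [SemilatticeInf L] (a : L) : Set (Set L) :=
  {P | IsSLPrimeFilter P ∧ a ∈ P}

/-- φ(a): the set of optimal filters containing `a`. -/
def phiSet {L : Type*} [SemilatticeInf L] (a : L) : Set (Set L) :=
  {F | IsOptimalFilter F ∧ a ∈ F}


lemma isSLFilter_Ici {L : Type*} [SemilatticeInf L] (a : L) : IsSLFilter (Set.Ici a) :=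
  ⟨⟨a, le_refl a⟩, fun _ _ hx hxy => le_trans hx hxy, fun _ _ hx hy => le_inf hx hy⟩

lemma isSLFilter_biInter {L : Type*} [SemilatticeInf L] [OrderTop L] (A : Finset L) :
    IsSLFilter (⋂ a ∈ A, Set.Ici a) := by
  refine ⟨⟨⊤, ?_⟩, fun x y hx hxy => ?_, fun x y hx hy => ?_⟩ <;>
    simp only [Set.mem_iInter, Set.mem_Ici] at *
  · intro a _; exact le_top
  · intro a ha; exact le_trans (hx a ha) hxy
  · intro a ha; exact le_inf (hx a ha) (hy a ha)

lemma prime_biInter {L : Type*} [SemilatticeInf L] [OrderTop L] {F : Set L}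
    (hF : IsSLPrimeFilter F) :
    ∀ A : Finset L, (⋂ a ∈ A, Set.Ici a) ⊆ F → A.Nonempty → ∃ a ∈ A, a ∈ F := by
  intro A
  classical
  induction A using Finset.induction_on with
  | empty => intro _ h; exact absurd h (by simp)
  | insert _ _ hnotmem ih =>
    rename_i a A
    intro hsub _
    rw [Finset.set_biInter_insert] at hsub
    rcases A.eq_empty_or_nonempty with rfl | hA
    · have ha : a ∈ Set.Ici a ∩ ⋂ x ∈ (∅ : Finset L), Set.Ici x :=
        ⟨le_refl a, by simp⟩
      exact ⟨a, by simp, hsub ha⟩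
    · rcases hF.2.2 _ _ (isSLFilter_Ici a) (isSLFilter_biInter A) hsub with h | h
      · exact ⟨a, Finset.mem_insert_self a A, h (le_refl a)⟩
      · obtain ⟨b, hb, hbF⟩ := ih h hA
        exact ⟨b, Finset.mem_insert_of_mem hb, hbF⟩

lemma supprime_finset {L : Type*} [Lattice L] {F : Set L} (hF : IsSLFilter F)
    (hp : ∀ a b : L, a ⊔ b ∈ F → a ∈ F ∨ b ∈ F) :
    ∀ (A : Finset L) (hA : A.Nonempty), A.sup' hA id ∈ F → ∃ a ∈ A, a ∈ F := by
  intro A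
  classical
  induction A using Finset.induction_on with
  | empty => intro h; exact absurd h (by simp)
  | insert _ _ hnotmem ih =>
    rename_i a A
    intro _ hsup
    rcases A.eq_empty_or_nonempty with rfl | hA
    · simp only [insert_empty_eq, Finset.sup'_singleton, id] at hsup
      exact ⟨a, by simp, hsup⟩
    · rw [Finset.sup'_insert hA] at hsup
      rcases hp _ _ hsup with h | h
      · exact ⟨a, Finset.mem_insert_self a A, h⟩
      · obtain ⟨b, hb, hbF⟩ := ih hA h
        exact ⟨b, Finset.mem_insert_of_mem hb, hbF⟩


universe u

/-- Every prime filter of a distributive meet semi-lattice with top is optimal;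
in a (distributive) lattice with top, optimal filters are exactly the prime
filters in the lattice sense. -/
theorem prime_is_optimal_and_lattice_case :
    (∀ (L : Type u) [SemilatticeInf L] [OrderTop L], IsDistribSL L →
      ∀ F : Set L, IsSLPrimeFilter F → IsOptimalFilter F) ∧
    (∀ (L : Type u) [Lattice L] [OrderTop L], IsDistribSL L →
      ∀ F : Set L, IsSLFilter F →
        (IsOptimalFilter F ↔
          F ≠ Set.univ ∧ ∀ a b : L, a ⊔ b ∈ F → a ∈ F ∨ b ∈ F)) := by
  constructor
  · intro L _ _ _ F hF
    refine ⟨hF.1, ?_, ?_⟩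
    · obtain ⟨x, hx⟩ := Set.ne_univ_iff_exists_notMem F |>.mp hF.2.1
      exact ⟨x, hx⟩
    · intro A hA hAsub c hc
      intro hcF
      have : (⋂ a ∈ A, Set.Ici a) ⊆ F := fun x hx =>
        hF.1.2.1 c x hcF (hc hx)
      obtain ⟨a, haA, haF⟩ := prime_biInter hF A this hA
      exact hAsub haA haF
  · intro L _ _ _ F hF
    classical
    constructor
    · intro hopt
      obtain ⟨x, hx⟩ := hopt.2.1
      refine ⟨fun h => hx (h ▸ Set.mem_univ x), fun a b hab => ?_⟩
      by_contra h
      push_neg at h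
      have hAsub : ↑({a, b} : Finset L) ⊆ Fᶜ := by
        intro x hx
        simp only [Finset.coe_insert, Finset.coe_singleton, Set.mem_insert_iff,
          Set.mem_singleton_iff] at hx
        rcases hx with rfl | rfl
        · exact h.1
        · exact h.2
      have hc : (⋂ x ∈ ({a, b} : Finset L), Set.Ici x) ⊆ Set.Ici (a ⊔ b) := by
        intro x hx
        simp only [Set.mem_iInter, Finset.mem_insert, Finset.mem_singleton] at hx
        exact sup_le (hx a (Or.inl rfl)) (hx b (Or.inr rfl))
      exact hopt.2.2 {a, b} ⟨a, by simp⟩ hAsub (a ⊔ b) hc hab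
    · rintro ⟨hne, hp⟩
      refine ⟨hF, ?_, ?_⟩
      · obtain ⟨x, hx⟩ := Set.ne_univ_iff_exists_notMem F |>.mp hne
        exact ⟨x, hx⟩
      · intro A hA hAsub c hc
        intro hcF
        have hsup_mem : A.sup' hA id ∈ ⋂ a ∈ A, Set.Ici a := by
          simp only [Set.mem_iInter, Set.mem_Ici]
          intro a ha
          exact Finset.le_sup' id ha
        have hcs : c ≤ A.sup' hA id := hc hsup_mem
        have : A.sup' hA id ∈ F := hF.2.1 c _ hcF hcs
        obtain ⟨a, haA, haF⟩ := supprime_finset hF hp A hA this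
        exact hAsub haA haF
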